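/- arXiv:1806.07928 — 7 statements merged into one kernel-verified Lean document; each statement's English description precedes it below -/
import Mathlib

section
/- Let C_A, C_B, C_X ≥ 0. Suppose A_i, B_i : Ω → ℝ satisfy that A_i⁴ and B_i⁴ are integrable with E[A_i⁴] ≤ C_A and E[B_i⁴] ≤ C_B for every i ∈ I, and suppose 𝒜_s : Ω → ℝ is square-integrable with E[𝒜_s²] ≤ C_X for every s ∈ S. Then the random variable ∑_{i∈I} ∑_{j∈I} ∑_{s∈S} w_{is} w_{js} A_i B_j 𝒜_s is integrable and E[|∑_{i,j∈I} ∑_{s∈S} w_{is} w_{js} A_i B_j 𝒜_s|] ≤ C_A^{1/4} · C_B^{1/4} · C_X^{1/2} · ∑_{s∈S} n_s². (Quantitative expectation bound proved in Online Appendix Lemma A.3; by Markov's inequality it yields that (∑_s n_s²)^{-1} ∑_{i,j,s} w_{is} w_{js} A_i B_j 𝒜_s = O_p(1).) -/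
open MeasureTheory ENNReal

section Helpers
variable {Ω : Type*} [MeasurableSpace Ω] {μ : Measure Ω}

private lemma exp1 : (1:ℝ≥0∞)/(4/3) = 1/4 + 1/2 := by
  rw [one_div, ENNReal.inv_div (by norm_num) (by norm_num)]
  rw [show (1:ℝ≥0∞)/2 = 2/4 by rw [ENNReal.div_eq_div_iff] <;> norm_num,
    ENNReal.div_add_div_same]
  norm_num

private lemma exp2 : (1:ℝ≥0∞)/1 = 1/4 + 1/(4/3) := by
  rw [exp1, show (1:ℝ≥0∞)/2 = 2/4 by rw [ENNReal.div_eq_div_iff] <;> norm_num,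
    ENNReal.div_add_div_same, ENNReal.div_add_div_same,
    ENNReal.div_self (by norm_num) (by norm_num), Eq.comm,
    ENNReal.div_eq_one_iff (by norm_num) (by norm_num)]
  norm_num

private lemma key (f g h : Ω → ℝ) (hf : MemLp f 4 μ) (hg : MemLp g 4 μ) (hh : MemLp h 2 μ) :
    Integrable (fun ω => f ω * g ω * h ω) μ ∧
      eLpNorm (fun ω => f ω * g ω * h ω) 1 μ
        ≤ eLpNorm f 4 μ * (eLpNorm g 4 μ * eLpNorm h 2 μ) := by
  have hgh : MemLp (fun ω => g ω * h ω) (4/3) μ := by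
    simpa [smul_eq_mul, Pi.mul_def] using hh.smul hg (hpqr := ⟨by simpa only [one_div] using exp1.symm⟩)
  have hfgh : MemLp (fun ω => f ω * g ω * h ω) 1 μ := by
    have := hgh.smul hf (hpqr := ⟨by simpa only [one_div] using exp2.symm⟩)
    simpa [smul_eq_mul, mul_assoc, Pi.mul_def] using this
  refine ⟨memLp_one_iff_integrable.mp hfgh, ?_⟩
  have h1 : eLpNorm (fun ω => f ω * (g ω * h ω)) 1 μ
      ≤ eLpNorm f 4 μ * eLpNorm (fun ω => g ω * h ω) (4/3) μ :=
    by have := eLpNorm_le_eLpNorm_mul_eLpNorm'_of_norm hf.1 hgh.1 (· * ·) 1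
         (Filter.Eventually.of_forall fun x => by simp [abs_mul])
         (hpqr := ⟨by simpa only [one_div] using exp2.symm⟩)
       rwa [ENNReal.coe_one, one_mul] at this
  have h2 : eLpNorm (fun ω => g ω * h ω) (4/3) μ ≤ eLpNorm g 4 μ * eLpNorm h 2 μ :=
    by have := eLpNorm_le_eLpNorm_mul_eLpNorm'_of_norm hg.1 hh.1 (· * ·) 1
         (Filter.Eventually.of_forall fun x => by simp [abs_mul])
         (hpqr := ⟨by simpa only [one_div] using exp1.symm⟩)
       rwa [ENNReal.coe_one, one_mul] at this
  calc eLpNorm (fun ω => f ω * g ω * h ω) 1 μ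
      = eLpNorm (fun ω => f ω * (g ω * h ω)) 1 μ := by simp_rw [mul_assoc]
    _ ≤ eLpNorm f 4 μ * eLpNorm (fun ω => g ω * h ω) (4/3) μ := h1
    _ ≤ eLpNorm f 4 μ * (eLpNorm g 4 μ * eLpNorm h 2 μ) := by
        exact mul_le_mul_right h2 _

private lemma bd4 {C : ℝ} (hC : 0 ≤ C) {f : Ω → ℝ} (hf : MemLp f 4 μ)
    (hbd : ∫ ω, f ω ^ 4 ∂μ ≤ C) : (eLpNorm f 4 μ).toReal ≤ C ^ ((1:ℝ)/4) := by
  rw [hf.eLpNorm_eq_integral_rpow_norm (by norm_num) (by norm_num),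
    ENNReal.toReal_ofReal (by positivity)]
  have hint : (∫ ω, ‖f ω‖ ^ ((4:ℝ≥0∞).toReal) ∂μ) = ∫ ω, f ω ^ 4 ∂μ := by
    refine integral_congr_ae (Filter.Eventually.of_forall fun ω => ?_)
    show ‖f ω‖ ^ ((4:ℝ≥0∞).toReal) = f ω ^ 4
    rw [show ((4:ℝ≥0∞).toReal) = ((4:ℕ):ℝ) by norm_num, Real.rpow_natCast,
      Real.norm_eq_abs, (even_iff_two_dvd.mpr (by norm_num) : Even 4).pow_abs]
  rw [hint, show ((4:ℝ≥0∞).toReal)⁻¹ = (1:ℝ)/4 by norm_num]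
  exact Real.rpow_le_rpow (integral_nonneg fun ω => by positivity) hbd (by norm_num)

private lemma bd2 {C : ℝ} (hC : 0 ≤ C) {f : Ω → ℝ} (hf : MemLp f 2 μ)
    (hbd : ∫ ω, f ω ^ 2 ∂μ ≤ C) : (eLpNorm f 2 μ).toReal ≤ C ^ ((1:ℝ)/2) := by
  rw [hf.eLpNorm_eq_integral_rpow_norm (by norm_num) (by norm_num),
    ENNReal.toReal_ofReal (by positivity)]
  have hint : (∫ ω, ‖f ω‖ ^ ((2:ℝ≥0∞).toReal) ∂μ) = ∫ ω, f ω ^ 2 ∂μ := by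
    refine integral_congr_ae (Filter.Eventually.of_forall fun ω => ?_)
    show ‖f ω‖ ^ ((2:ℝ≥0∞).toReal) = f ω ^ 2
    rw [show ((2:ℝ≥0∞).toReal) = ((2:ℕ):ℝ) by norm_num, Real.rpow_natCast,
      Real.norm_eq_abs, (even_iff_two_dvd.mpr (by norm_num) : Even 2).pow_abs]
  rw [hint, show ((2:ℝ≥0∞).toReal)⁻¹ = (1:ℝ)/2 by norm_num]
  exact Real.rpow_le_rpow (integral_nonneg fun ω => by positivity) hbd (by norm_num)

end Helpers

/-- Quantitative expectation bound from Online Appendix Lemma A.3: with nonnegative weights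
`w i s`, fourth moments of `A i` and `B j` bounded by `C_A` and `C_B`, and second moments of
`𝒜 s` bounded by `C_X`, the triple sum `∑ i j s, w i s * w j s * A i * B j * 𝒜 s` is
integrable with `E[|·|] ≤ C_A^(1/4) * C_B^(1/4) * C_X^(1/2) * ∑ s, n s ^ 2`. -/
theorem stmt_4 {Ω : Type*} [MeasurableSpace Ω] (μ : Measure Ω) [IsProbabilityMeasure μ]
    {I S : Type*} [Fintype I] [Fintype S] [Nonempty I] [Nonempty S]
    (w : I → S → ℝ) (hw : ∀ i s, 0 ≤ w i s)
    (CA CB CX : ℝ) (hCA : 0 ≤ CA) (hCB : 0 ≤ CB) (hCX : 0 ≤ CX)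
    (A B : I → Ω → ℝ) (X : S → Ω → ℝ)
    (hA : ∀ i, MemLp (A i) 4 μ) (hAbd : ∀ i, ∫ ω, (A i ω) ^ 4 ∂μ ≤ CA)
    (hB : ∀ i, MemLp (B i) 4 μ) (hBbd : ∀ i, ∫ ω, (B i ω) ^ 4 ∂μ ≤ CB)
    (hX : ∀ s, MemLp (X s) 2 μ) (hXbd : ∀ s, ∫ ω, (X s ω) ^ 2 ∂μ ≤ CX) :
    Integrable (fun ω => ∑ i, ∑ j, ∑ s, w i s * w j s * A i ω * B j ω * X s ω) μ ∧
      ∫ ω, |∑ i, ∑ j, ∑ s, w i s * w j s * A i ω * B j ω * X s ω| ∂μ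
        ≤ CA ^ ((1 : ℝ) / 4) * CB ^ ((1 : ℝ) / 4) * CX ^ ((1 : ℝ) / 2)
            * ∑ s, (∑ i, w i s) ^ 2 := by
  set K : ℝ := CA ^ ((1 : ℝ) / 4) * CB ^ ((1 : ℝ) / 4) * CX ^ ((1 : ℝ) / 2) with hK
  have hK0 : 0 ≤ K := by positivity
  -- per-triple integrability and bound
  have hterm : ∀ (i j : I) (s : S),
      Integrable (fun ω => A i ω * B j ω * X s ω) μ ∧
        ∫ ω, |A i ω * B j ω * X s ω| ∂μ ≤ K := by
    intro i j s
    obtain ⟨hint, hle⟩ := key (A i) (B j) (X s) (hA i) (hB j) (hX s)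
    refine ⟨hint, ?_⟩
    have hfin : eLpNorm (A i) 4 μ * (eLpNorm (B j) 4 μ * eLpNorm (X s) 2 μ) ≠ ⊤ :=
      ENNReal.mul_ne_top (hA i).eLpNorm_ne_top
        (ENNReal.mul_ne_top (hB j).eLpNorm_ne_top (hX s).eLpNorm_ne_top)
    have h0 : ∫ ω, |A i ω * B j ω * X s ω| ∂μ
        = (eLpNorm (fun ω => A i ω * B j ω * X s ω) 1 μ).toReal := by
      rw [(memLp_one_iff_integrable.mpr hint).eLpNorm_eq_integral_rpow_norm one_ne_zero
        ENNReal.one_ne_top, ENNReal.toReal_ofReal (by positivity)]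
      simp [Real.norm_eq_abs, abs_mul]
    rw [h0]
    calc (eLpNorm (fun ω => A i ω * B j ω * X s ω) 1 μ).toReal
        ≤ (eLpNorm (A i) 4 μ * (eLpNorm (B j) 4 μ * eLpNorm (X s) 2 μ)).toReal :=
          ENNReal.toReal_mono hfin hle
      _ = (eLpNorm (A i) 4 μ).toReal *
            ((eLpNorm (B j) 4 μ).toReal * (eLpNorm (X s) 2 μ).toReal) := by
          rw [ENNReal.toReal_mul, ENNReal.toReal_mul]
      _ ≤ CA ^ ((1 : ℝ) / 4) * (CB ^ ((1 : ℝ) / 4) * CX ^ ((1 : ℝ) / 2)) := by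
          refine mul_le_mul (bd4 hCA (hA i) (hAbd i)) ?_ (by positivity) (by positivity)
          exact mul_le_mul (bd4 hCB (hB j) (hBbd j)) (bd2 hCX (hX s) (hXbd s))
            ENNReal.toReal_nonneg (by positivity)
      _ = K := by rw [hK, mul_assoc]
  -- integrability of each summand and of the triple sum
  have htermInt : ∀ (i j : I) (s : S),
      Integrable (fun ω => w i s * w j s * A i ω * B j ω * X s ω) μ := by
    intro i j s
    have := ((hterm i j s).1).const_mul (w i s * w j s)
    simpa [mul_assoc] using this
  have hSumInt : Integrable
      (fun ω => ∑ i, ∑ j, ∑ s, w i s * w j s * A i ω * B j ω * X s ω) μ := by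
    refine integrable_finset_sum _ fun i _ => integrable_finset_sum _ fun j _ =>
      integrable_finset_sum _ fun s _ => htermInt i j s
  refine ⟨hSumInt, ?_⟩
  -- pointwise triangle inequality
  have hptw : ∀ ω, |∑ i, ∑ j, ∑ s, w i s * w j s * A i ω * B j ω * X s ω|
      ≤ ∑ i, ∑ j, ∑ s, w i s * w j s * |A i ω * B j ω * X s ω| := by
    intro ω
    calc |∑ i, ∑ j, ∑ s, w i s * w j s * A i ω * B j ω * X s ω|
        ≤ ∑ i, |∑ j, ∑ s, w i s * w j s * A i ω * B j ω * X s ω| :=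
          Finset.abs_sum_le_sum_abs _ _
      _ ≤ ∑ i, ∑ j, |∑ s, w i s * w j s * A i ω * B j ω * X s ω| :=
          Finset.sum_le_sum fun i _ => Finset.abs_sum_le_sum_abs _ _
      _ ≤ ∑ i, ∑ j, ∑ s, |w i s * w j s * A i ω * B j ω * X s ω| :=
          Finset.sum_le_sum fun i _ => Finset.sum_le_sum fun j _ =>
            Finset.abs_sum_le_sum_abs _ _
      _ = ∑ i, ∑ j, ∑ s, w i s * w j s * |A i ω * B j ω * X s ω| := by
          refine Finset.sum_congr rfl fun i _ => Finset.sum_congr rfl fun j _ =>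
            Finset.sum_congr rfl fun s _ => ?_
          rw [show w i s * w j s * A i ω * B j ω * X s ω
              = w i s * w j s * (A i ω * B j ω * X s ω) by ring, abs_mul,
            abs_of_nonneg (mul_nonneg (hw i s) (hw j s))]
  have habsInt : ∀ (i j : I) (s : S),
      Integrable (fun ω => w i s * w j s * |A i ω * B j ω * X s ω|) μ :=
    fun i j s => ((hterm i j s).1.abs).const_mul _
  calc ∫ ω, |∑ i, ∑ j, ∑ s, w i s * w j s * A i ω * B j ω * X s ω| ∂μ
      ≤ ∫ ω, ∑ i, ∑ j, ∑ s, w i s * w j s * |A i ω * B j ω * X s ω| ∂μ := by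
        refine integral_mono hSumInt.abs ?_ hptw
        exact integrable_finset_sum _ fun i _ => integrable_finset_sum _ fun j _ =>
          integrable_finset_sum _ fun s _ => habsInt i j s
    _ = ∑ i, ∑ j, ∑ s, ∫ ω, w i s * w j s * |A i ω * B j ω * X s ω| ∂μ := by
        rw [integral_finset_sum _ fun i _ => integrable_finset_sum _ fun j _ =>
          integrable_finset_sum _ fun s _ => habsInt i j s]
        refine Finset.sum_congr rfl fun i _ => ?_
        rw [integral_finset_sum _ fun j _ => integrable_finset_sum _ fun s _ => habsInt i j s]
        exact Finset.sum_congr rfl fun j _ =>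
          integral_finset_sum _ fun s _ => habsInt i j s
    _ ≤ ∑ i, ∑ j, ∑ s, w i s * w j s * K := by
        refine Finset.sum_le_sum fun i _ => Finset.sum_le_sum fun j _ =>
          Finset.sum_le_sum fun s _ => ?_
        rw [integral_const_mul]
        exact mul_le_mul_of_nonneg_left (hterm i j s).2
          (mul_nonneg (hw i s) (hw j s))
    _ = K * ∑ s, (∑ i, w i s) ^ 2 := by
        calc ∑ i, ∑ j, ∑ s, w i s * w j s * K
            = ∑ i, ∑ s, ∑ j, w i s * w j s * K :=
              Finset.sum_congr rfl fun i _ => Finset.sum_comm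
          _ = ∑ s, ∑ i, ∑ j, w i s * w j s * K := Finset.sum_comm
          _ = ∑ s, (∑ i, w i s) ^ 2 * K := by
              refine Finset.sum_congr rfl fun s _ => ?_
              rw [sq, Finset.sum_mul_sum, Finset.sum_mul]
              exact Finset.sum_congr rfl fun i _ => (Finset.sum_mul _ _ _).symm
          _ = K * ∑ s, (∑ i, w i s) ^ 2 := by rw [← Finset.sum_mul, mul_comm]
end

section
/- Let M ≥ 0 satisfy n_s ≤ M for every s ∈ S. Then ∑_{s∈S} ∑_{t∈S} ∑_{u∈S} ∑_{v∈S} w̄_{st} w̄_{su} w̄_{vt} w̄_{vu} ≤ M² · ∑_{s∈S} n_s². (Deterministic inequality (A.9) in the proof of asymptotic normality of the shift-share OLS estimator.) -/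
/-- Deterministic inequality (A.9) in the proof of asymptotic normality: if `n s ≤ M` for
every sector `s`, then `∑ s t u v, w̄ s t * w̄ s u * w̄ v t * w̄ v u ≤ M^2 * ∑ s, n s ^ 2`,
where `n s = ∑ i, w i s` and `w̄ s t = ∑ i, w i s * w i t`. -/
theorem stmt_5 {I S : Type*} [Fintype I] [Fintype S] [Nonempty I] [Nonempty S]
    (w : I → S → ℝ) (hw : ∀ i s, 0 ≤ w i s) (hw1 : ∀ i, ∑ s, w i s ≤ 1)
    (M : ℝ) (hM : 0 ≤ M) (hn : ∀ s, ∑ i, w i s ≤ M) :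
    ∑ s, ∑ t, ∑ u, ∑ v,
        (∑ i, w i s * w i t) * (∑ i, w i s * w i u) *
          (∑ i, w i v * w i t) * (∑ i, w i v * w i u)
      ≤ M ^ 2 * ∑ s, (∑ i, w i s) ^ 2 := by
  set B : S → S → ℝ := fun s t => ∑ i, w i s * w i t with hBdef
  have hwle1 : ∀ i s, w i s ≤ 1 := fun i s =>
    le_trans (Finset.single_le_sum (fun t _ => hw i t) (Finset.mem_univ s)) (hw1 i)
  have hB0 : ∀ s t, 0 ≤ B s t := fun s t =>
    Finset.sum_nonneg fun i _ => mul_nonneg (hw i s) (hw i t)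
  have hBle : ∀ s t, B s t ≤ M := fun s t => by
    calc B s t ≤ ∑ i, w i t := Finset.sum_le_sum fun i _ => by
          nlinarith [hw i s, hw i t, hwle1 i s]
      _ ≤ M := hn t
  have hrow : ∀ s, ∑ t, B s t ≤ ∑ i, w i s := fun s => by
    rw [hBdef]
    rw [Finset.sum_comm]
    calc ∑ i, ∑ t, w i s * w i t = ∑ i, w i s * ∑ t, w i t := by
          simp [Finset.mul_sum]
      _ ≤ ∑ i, w i s * 1 := Finset.sum_le_sum fun i _ =>
          mul_le_mul_of_nonneg_left (hw1 i) (hw i s)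
      _ = ∑ i, w i s := by simp
  have hcol : ∀ t, ∑ v, B v t ≤ M := fun t => by
    rw [hBdef]
    rw [Finset.sum_comm]
    calc ∑ i, ∑ v, w i v * w i t = ∑ i, (∑ v, w i v) * w i t := by
          simp [Finset.sum_mul]
      _ ≤ ∑ i, 1 * w i t := Finset.sum_le_sum fun i _ =>
          mul_le_mul_of_nonneg_right (hw1 i) (hw i t)
      _ ≤ M := by simpa using hn t
  have step1 : ∀ t u, ∑ v, B v t * B v u ≤ M * M := fun t u => by
    calc ∑ v, B v t * B v u ≤ ∑ v, B v t * M :=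
          Finset.sum_le_sum fun v _ => mul_le_mul_of_nonneg_left (hBle v u) (hB0 v t)
      _ = (∑ v, B v t) * M := by rw [Finset.sum_mul]
      _ ≤ M * M := mul_le_mul_of_nonneg_right (hcol t) hM
  calc ∑ s, ∑ t, ∑ u, ∑ v, B s t * B s u * B v t * B v u
      = ∑ s, ∑ t, ∑ u, (B s t * B s u) * ∑ v, B v t * B v u := by
        simp [Finset.mul_sum, mul_assoc]
    _ ≤ ∑ s, ∑ t, ∑ u, (B s t * B s u) * (M * M) := by
        refine Finset.sum_le_sum fun s _ => Finset.sum_le_sum fun t _ =>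
          Finset.sum_le_sum fun u _ => ?_
        exact mul_le_mul_of_nonneg_left (step1 t u) (mul_nonneg (hB0 s t) (hB0 s u))
    _ = (M * M) * ∑ s, (∑ t, B s t) ^ 2 := by
        rw [Finset.mul_sum]
        refine Finset.sum_congr rfl fun s _ => ?_
        rw [sq, Finset.sum_mul_sum, Finset.mul_sum]
        refine Finset.sum_congr rfl fun t _ => ?_
        rw [Finset.mul_sum]
        exact Finset.sum_congr rfl fun u _ => by ring
    _ ≤ M ^ 2 * ∑ s, (∑ i, w i s) ^ 2 := by
        rw [sq]
        refine mul_le_mul_of_nonneg_left (Finset.sum_le_sum fun s _ => ?_)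
          (mul_nonneg hM hM)
        exact pow_le_pow_left₀ (Finset.sum_nonneg fun t _ => hB0 s t) (hrow s) 2
end

section
/- Let M ≥ 0 satisfy n_s ≤ M for every s ∈ S. Then ∑_{t∈S} (∑_{s∈S} n_s w̄_{st})² ≤ M² · ∑_{t∈S} n_t². (Deterministic bound used to show that the conditional-variance term D₁ in the proof of asymptotic normality is o_p(1).) -/
/-- Deterministic bound used to show the conditional-variance term `D₁` is `o_p(1)`:
if `n s ≤ M` for every `s`, then `∑ t, (∑ s, n s * w̄ s t)^2 ≤ M^2 * ∑ t, n t ^ 2`,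
where `n s = ∑ i, w i s` and `w̄ s t = ∑ i, w i s * w i t`. -/
theorem stmt_7 {I S : Type*} [Fintype I] [Fintype S] [Nonempty I] [Nonempty S]
    (w : I → S → ℝ) (hw : ∀ i s, 0 ≤ w i s) (hw1 : ∀ i, ∑ s, w i s ≤ 1)
    (M : ℝ) (hM : 0 ≤ M) (hn : ∀ s, ∑ i, w i s ≤ M) :
    ∑ t, (∑ s, (∑ i, w i s) * (∑ i, w i s * w i t)) ^ 2
      ≤ M ^ 2 * ∑ t, (∑ i, w i t) ^ 2 := by
  rw [Finset.mul_sum]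
  apply Finset.sum_le_sum
  intro t _
  have h0 : 0 ≤ ∑ s, (∑ i, w i s) * (∑ i, w i s * w i t) := by
    apply Finset.sum_nonneg
    intro s _
    exact mul_nonneg (Finset.sum_nonneg fun i _ => hw i s)
      (Finset.sum_nonneg fun i _ => mul_nonneg (hw i s) (hw i t))
  have hle : ∑ s, (∑ i, w i s) * (∑ i, w i s * w i t) ≤ M * ∑ i, w i t := by
    have heq : ∑ s, (∑ i, w i s) * (∑ i, w i s * w i t)
        = ∑ i, (∑ s, (∑ j, w j s) * w i s) * w i t := by
      simp_rw [Finset.mul_sum, Finset.sum_mul]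
      rw [Finset.sum_comm]
      congr 1; ext i; congr 1; ext s; exact Finset.sum_congr rfl fun x _ => by ring
    rw [heq, Finset.mul_sum]
    apply Finset.sum_le_sum
    intro i _
    apply mul_le_mul_of_nonneg_right _ (hw i t)
    calc ∑ s, (∑ j, w j s) * w i s ≤ ∑ s, M * w i s := by
          apply Finset.sum_le_sum
          intro s _
          exact mul_le_mul_of_nonneg_right (hn s) (hw i s)
      _ = M * ∑ s, w i s := (Finset.mul_sum _ _ _).symm
      _ ≤ M * 1 := mul_le_mul_of_nonneg_left (hw1 i) hM
      _ = M := mul_one M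
  calc (∑ s, (∑ i, w i s) * (∑ i, w i s * w i t)) ^ 2
      ≤ (M * ∑ i, w i t) ^ 2 := pow_le_pow_left₀ h0 hle 2
    _ = M ^ 2 * (∑ i, w i t) ^ 2 := by ring
end

section
/- Let s⋆ : I → S assign to each region i a sector s⋆(i), and let M ≥ 0 satisfy w_{is} ≤ M for every i ∈ I and every s ∈ S with s ≠ s⋆(i) (so M bounds the share of every sector other than each region's designated largest sector). Then ∑_{i∈I} ∑_{j∈I} ∑_{s,t∈S, s≠t} w_{is} w_{it} w_{js} w_{jt} ≤ 2M · ∑_{t∈S} n_t². (Deterministic inequality showing that if the share of the second-largest sector is uniformly small then T_N = ∑_{s≠t}(∑_i w_{is}w_{it})²/∑_s n_s² is small, a sufficient condition for validity of the proposed standard errors under heterogeneous effects.) -/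
/-- If every sector other than each region's designated largest sector `s⋆ i` has share at
most `M`, then `∑ i j, ∑ s ≠ t, w i s * w i t * w j s * w j t ≤ 2 * M * ∑ t, n t ^ 2`,
where `n t = ∑ i, w i t`.  (Sufficient condition for `T_N → 0` in the discussion of
inference under heterogeneous treatment effects.) -/
theorem stmt_9 {I S : Type*} [Fintype I] [Fintype S] [Nonempty I] [Nonempty S] [DecidableEq S]
    (w : I → S → ℝ) (hw : ∀ i s, 0 ≤ w i s) (hw1 : ∀ i, ∑ s, w i s ≤ 1)
    (sstar : I → S) (M : ℝ) (hM : 0 ≤ M)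
    (hsmall : ∀ i, ∀ s, s ≠ sstar i → w i s ≤ M) :
    ∑ i, ∑ j, ∑ s, ∑ t ∈ Finset.univ.filter (fun t => s ≠ t),
        w i s * w i t * w j s * w j t
      ≤ 2 * M * ∑ t, (∑ i, w i t) ^ 2 := by
  set n : S → ℝ := fun t => ∑ i, w i t with hn
  set b : S → S → ℝ := fun s t => ∑ i, w i s * w i t with hb
  have hbnn : ∀ s t, 0 ≤ b s t := fun s t =>
    Finset.sum_nonneg fun i _ => mul_nonneg (hw i s) (hw i t)
  have hnnn : ∀ t, 0 ≤ n t := fun t => Finset.sum_nonneg fun i _ => hw i t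
  have key : ∀ s t, s ≠ t → b s t ≤ M * (n s + n t) := by
    intro s t hst
    have h1 : b s t ≤ ∑ i, M * (w i s + w i t) := by
      apply Finset.sum_le_sum
      intro i _
      by_cases h : s = sstar i
      · have ht : t ≠ sstar i := fun h' => hst (h.trans h'.symm)
        have := hsmall i t ht
        nlinarith [hw i s, hw i t, mul_nonneg hM (hw i t)]
      · have := hsmall i s h
        nlinarith [hw i s, hw i t, mul_nonneg hM (hw i s)]
    calc b s t ≤ ∑ i, M * (w i s + w i t) := h1
      _ = M * (n s + n t) := by
          simp [hn, mul_add, Finset.sum_add_distrib, Finset.mul_sum]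
  -- rewrite LHS as sum over s ≠ t of b s t ^ 2
  have hL : (∑ i, ∑ j, ∑ s, ∑ t ∈ Finset.univ.filter (fun t => s ≠ t),
        w i s * w i t * w j s * w j t)
      = ∑ s, ∑ t ∈ Finset.univ.filter (fun t => s ≠ t), b s t ^ 2 := by
    have : ∀ s t : S, b s t ^ 2 = ∑ i, ∑ j, w i s * w i t * w j s * w j t := by
      intro s t
      rw [sq, hb, Finset.sum_mul_sum]
      exact Finset.sum_congr rfl fun i _ => Finset.sum_congr rfl fun j _ => by ring
    simp only [this]
    calc ∑ i, ∑ j, ∑ s, ∑ t ∈ Finset.univ.filter (fun t => s ≠ t),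
            w i s * w i t * w j s * w j t
        = ∑ i, ∑ s, ∑ t ∈ Finset.univ.filter (fun t => s ≠ t),
            ∑ j, w i s * w i t * w j s * w j t := by
          refine Finset.sum_congr rfl fun i _ => ?_
          rw [Finset.sum_comm]
          exact Finset.sum_congr rfl fun s _ => Finset.sum_comm
      _ = ∑ s, ∑ t ∈ Finset.univ.filter (fun t => s ≠ t),
            ∑ i, ∑ j, w i s * w i t * w j s * w j t := by
          rw [Finset.sum_comm]
          exact Finset.sum_congr rfl fun s _ => Finset.sum_comm
  rw [hL]
  have hsymm : ∀ s t, b s t = b t s := fun s t =>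
    Finset.sum_congr rfl fun i _ => mul_comm _ _
  have hcol : ∀ t, ∑ s, b s t ≤ n t := by
    intro t
    have : ∑ s, b s t = ∑ i, (∑ s, w i s) * w i t := by
      rw [Finset.sum_comm]
      exact Finset.sum_congr rfl fun i _ => by rw [Finset.sum_mul]
    rw [this]
    calc ∑ i, (∑ s, w i s) * w i t ≤ ∑ i, 1 * w i t :=
          Finset.sum_le_sum fun i _ =>
            mul_le_mul_of_nonneg_right (hw1 i) (hw i t)
      _ = n t := by simp [hn]
  calc ∑ s, ∑ t ∈ Finset.univ.filter (fun t => s ≠ t), b s t ^ 2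
      ≤ ∑ s, ∑ t ∈ Finset.univ.filter (fun t => s ≠ t), b s t * (M * (n s + n t)) := by
        refine Finset.sum_le_sum fun s _ => Finset.sum_le_sum fun t ht => ?_
        have hst : s ≠ t := (Finset.mem_filter.mp ht).2
        rw [sq]
        exact mul_le_mul_of_nonneg_left (key s t hst) (hbnn s t)
    _ ≤ ∑ s, ∑ t, b s t * (M * (n s + n t)) := by
        refine Finset.sum_le_sum fun s _ => ?_
        refine Finset.sum_le_sum_of_subset_of_nonneg (Finset.filter_subset _ _) ?_
        intro t _ _
        exact mul_nonneg (hbnn s t) (mul_nonneg hM (add_nonneg (hnnn s) (hnnn t)))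
    _ = M * (∑ s, ∑ t, b s t * n s + ∑ s, ∑ t, b s t * n t) := by
        rw [← Finset.sum_add_distrib, Finset.mul_sum]
        refine Finset.sum_congr rfl fun s _ => ?_
        rw [← Finset.sum_add_distrib, Finset.mul_sum]
        exact Finset.sum_congr rfl fun t _ => by ring
    _ = M * (2 * ∑ t, n t * ∑ s, b s t) := by
        have h1 : ∑ s, ∑ t, b s t * n s = ∑ t, n t * ∑ s, b s t := by
          refine Finset.sum_congr rfl fun s _ => ?_
          rw [Finset.mul_sum]
          exact Finset.sum_congr rfl fun t _ => by rw [hsymm]; ring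
        have h2 : ∑ s, ∑ t, b s t * n t = ∑ t, n t * ∑ s, b s t := by
          rw [Finset.sum_comm]
          refine Finset.sum_congr rfl fun t _ => ?_
          rw [Finset.mul_sum]
          exact Finset.sum_congr rfl fun s _ => by ring
        rw [h1, h2]; ring
    _ ≤ 2 * M * ∑ t, n t ^ 2 := by
        have : ∑ t, n t * ∑ s, b s t ≤ ∑ t, n t ^ 2 := by
          refine Finset.sum_le_sum fun t _ => ?_
          rw [sq]
          exact mul_le_mul_of_nonneg_left (hcol t) (hnnn t)
        nlinarith [this]
end

section
/- Let w̌ : I × S → ℝ be a second weight matrix with w̌_{is} ≥ 0 for all i ∈ I, s ∈ S, and suppose ň_s := ∑_{i∈I} w̌_{is} > 0 for every s ∈ S. Then ∑_{i∈I} ∑_{j∈I} ∑_{s∈S} ∑_{t∈S} w_{is} w_{jt} (w̌_{js}/ň_s) (w̌_{it}/ň_t) ≤ ∑_{s∈S} n_s. (Deterministic weight bound used in the proof of consistency of the leave-one-out IV estimator with estimated shifters, Proposition A.2.) -/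
/-- Deterministic weight bound used in the proof of consistency of the leave-one-out IV
estimator (Proposition A.2): for a second nonnegative weight matrix `w̌` with positive
column sums `ň s = ∑ i, w̌ i s`,
`∑ i j s t, w i s * w j t * (w̌ j s / ň s) * (w̌ i t / ň t) ≤ ∑ s, n s`. -/
theorem stmt_11 {I S : Type*} [Fintype I] [Fintype S] [Nonempty I] [Nonempty S]
    (w : I → S → ℝ) (hw : ∀ i s, 0 ≤ w i s) (hw1 : ∀ i, ∑ s, w i s ≤ 1)
    (wc : I → S → ℝ) (hwc : ∀ i s, 0 ≤ wc i s)
    (hnc : ∀ s, 0 < ∑ i, wc i s) :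
    ∑ i, ∑ j, ∑ s, ∑ t,
        w i s * w j t * (wc j s / ∑ i', wc i' s) * (wc i t / ∑ i', wc i' t)
      ≤ ∑ s, ∑ i, w i s := by
  set n : S → ℝ := fun s => ∑ i, wc i s with hn
  set P : I → I → ℝ := fun i j => ∑ s, w i s * (wc j s / n s) with hP
  have hPnn : ∀ i j, 0 ≤ P i j := fun i j =>
    Finset.sum_nonneg fun s _ => mul_nonneg (hw i s) (div_nonneg (hwc j s) (hnc s).le)
  have hPle : ∀ i j, P i j ≤ 1 := by
    intro i j
    calc P i j ≤ ∑ s, w i s := by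
          apply Finset.sum_le_sum
          intro s _
          have h1 : wc j s / n s ≤ 1 := by
            rw [div_le_one (hnc s)]
            exact Finset.single_le_sum (fun i _ => hwc i s) (Finset.mem_univ j)
          exact mul_le_of_le_one_right (hw i s) h1
      _ ≤ 1 := hw1 i
  have key : ∀ i j, (∑ s, ∑ t,
        w i s * w j t * (wc j s / n s) * (wc i t / n t)) = P i j * P j i := by
    intro i j
    rw [hP, Finset.sum_mul_sum]
    apply Finset.sum_congr rfl
    intro s _
    apply Finset.sum_congr rfl
    intro t _
    ring
  calc ∑ i, ∑ j, ∑ s, ∑ t,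
        w i s * w j t * (wc j s / n s) * (wc i t / n t)
      = ∑ i, ∑ j, P i j * P j i := by
        apply Finset.sum_congr rfl; intro i _
        apply Finset.sum_congr rfl; intro j _
        exact key i j
    _ ≤ ∑ i, ∑ j, P i j := by
        apply Finset.sum_le_sum; intro i _
        apply Finset.sum_le_sum; intro j _
        exact mul_le_of_le_one_right (hPnn i j) (hPle j i)
    _ = ∑ i, ∑ s, w i s := by
        apply Finset.sum_congr rfl; intro i _
        rw [hP]
        rw [Finset.sum_comm]
        apply Finset.sum_congr rfl; intro s _
        rw [← Finset.mul_sum, ← Finset.sum_div]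
        have h : (∑ j, wc j s) = n s := rfl
        rw [h, div_self (hnc s).ne', mul_one]
    _ = ∑ s, ∑ i, w i s := Finset.sum_comm
end

section
/- Let φ > 1 and let υ, ω, b be positive reals with ω·υ ≤ b. Then the function u ↦ max(ω·u, b) · φ · υ^φ · u^{−(φ+1)} is Lebesgue integrable on the interval [υ, ∞), and ∫_{[υ,∞)} max(ω·u, b) · φ · υ^φ · u^{−(φ+1)} du = b · (1 + (1/(φ−1)) · υ^φ · (ω/b)^φ). (Expected-utility computation under Pareto-distributed work-preference draws, proved in the migration extension of the stylized model, Online Appendix C.3: the expected utility of residing in a region with wage ω and benefit b equals (b/P)(1 + (1/(φ−1)) ν^φ (ω/b)^φ) up to the price normalization P.) -/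
open MeasureTheory

/-- Expected-utility computation under Pareto-distributed work-preference draws (migration
extension, Online Appendix C.3): for `φ > 1` and `ω * υ ≤ b`, the function
`u ↦ max (ω * u) b * (φ * υ^φ * u^(-(φ+1)))` is integrable on `[υ, ∞)` with integral
`b * (1 + (1/(φ-1)) * υ^φ * (ω/b)^φ)`. -/
theorem stmt_15 (φ υ ω b : ℝ) (hφ : 1 < φ) (hυ : 0 < υ) (hω : 0 < ω) (hb : 0 < b)
    (h : ω * υ ≤ b) :
    IntegrableOn (fun u : ℝ => max (ω * u) b * (φ * υ ^ φ * u ^ (-(φ + 1)))) (Set.Ici υ) ∧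
      ∫ u in Set.Ici υ, max (ω * u) b * (φ * υ ^ φ * u ^ (-(φ + 1)))
        = b * (1 + 1 / (φ - 1) * υ ^ φ * (ω / b) ^ φ) := by
  set c : ℝ := b / ω with hc
  have hc0 : 0 < c := div_pos hb hω
  have hυc : υ ≤ c := (le_div_iff₀' hω).mpr h
  set f : ℝ → ℝ := fun u => max (ω * u) b * (φ * υ ^ φ * u ^ (-(φ + 1))) with hf
  have hωc : ω * c = b := by rw [hc]; field_simp
  -- pointwise forms on the two pieces
  have hcongr1 : ∀ u ∈ Set.Ico υ c, f u = (b * φ * υ ^ φ) * u ^ (-(φ + 1)) := by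
    intro u hu
    have hub : ω * u ≤ b := by nlinarith [hu.2.le]
    simp only [hf, max_eq_right hub]; ring
  have hcongr2 : ∀ u ∈ Set.Ici c, f u = (ω * φ * υ ^ φ) * u ^ (-φ) := by
    intro u hu
    have hu0 : 0 < u := lt_of_lt_of_le hc0 hu
    have hbu : b ≤ ω * u := by
      have : c ≤ u := hu; nlinarith
    have hpow : u ^ (-(φ + 1)) = u⁻¹ * u ^ (-φ) := by
      rw [show -(φ + 1) = (-1) + (-φ) by ring, Real.rpow_add hu0, Real.rpow_neg_one]
    simp only [hf, max_eq_left hbu, hpow]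
    field_simp
  -- integrability on Ico υ c
  have hcont : ContinuousOn f (Set.Icc υ c) := by
    apply ContinuousOn.mul
    · exact ((continuous_const.mul continuous_id).max continuous_const).continuousOn
    · apply ContinuousOn.mul continuousOn_const
      intro x hx
      exact (Real.continuousAt_rpow_const x _
        (Or.inl (ne_of_gt (lt_of_lt_of_le hυ hx.1)))).continuousWithinAt
  have hint1 : IntegrableOn f (Set.Ico υ c) :=
    (hcont.integrableOn_Icc).mono_set Set.Ico_subset_Icc_self
  -- integrability on Ici c
  have hint2 : IntegrableOn f (Set.Ici c) := by
    rw [integrableOn_Ici_iff_integrableOn_Ioi]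
    apply IntegrableOn.congr_fun
      ((integrableOn_Ioi_rpow_of_lt (by linarith : -φ < -1) hc0).const_mul (ω * φ * υ ^ φ))
      ?_ measurableSet_Ioi
    intro u hu
    exact (hcongr2 u (Set.mem_Ici.mpr (le_of_lt hu))).symm
  have hunion : Set.Ico υ c ∪ Set.Ici c = Set.Ici υ := Set.Ico_union_Ici_eq_Ici hυc
  have hdisj : Disjoint (Set.Ico υ c) (Set.Ici c) :=
    Set.disjoint_left.mpr fun u hu hu' => absurd hu' (not_le.mpr hu.2)
  have hintOn : IntegrableOn f (Set.Ici υ) := by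
    rw [← hunion]; exact hint1.union hint2
  refine ⟨hintOn, ?_⟩
  have hsplit : ∫ u in Set.Ici υ, f u = (∫ u in Set.Ico υ c, f u) + ∫ u in Set.Ici c, f u := by
    rw [← hunion, setIntegral_union hdisj measurableSet_Ici hint1 hint2]
  -- first integral
  have hI1 : ∫ u in Set.Ico υ c, f u
      = (b * φ * υ ^ φ) * ((c ^ (-φ) - υ ^ (-φ)) / (-φ)) := by
    rw [setIntegral_congr_fun measurableSet_Ico hcongr1, integral_Ico_eq_integral_Ioo,
      ← integral_Ioc_eq_integral_Ioo, ← intervalIntegral.integral_of_le hυc]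
    have h0 : (0:ℝ) ∉ Set.uIcc υ c := by
      rw [Set.uIcc_of_le hυc]
      intro h0; exact absurd h0.1 (not_le.mpr hυ)
    rw [intervalIntegral.integral_const_mul,
      integral_rpow (Or.inr ⟨by intro hh; nlinarith [hh], h0⟩)]
    norm_num
  -- second integral
  have hI2 : ∫ u in Set.Ici c, f u = (ω * φ * υ ^ φ) * (-c ^ (-φ + 1) / (-φ + 1)) := by
    rw [integral_Ici_eq_integral_Ioi,
      setIntegral_congr_fun measurableSet_Ioi (fun u hu => hcongr2 u (Set.mem_Ici.mpr (le_of_lt hu))),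
      MeasureTheory.integral_const_mul, integral_Ioi_rpow_of_lt (by linarith : -φ < -1) hc0]
  -- algebraic identities
  have hυφ : υ ^ φ * υ ^ (-φ) = 1 := by
    rw [← Real.rpow_add hυ]; norm_num
  have hcφ : c ^ (-φ) = (ω / b) ^ φ := by
    rw [show (ω / b) = c⁻¹ by rw [hc]; field_simp, Real.inv_rpow hc0.le,
      ← Real.rpow_neg hc0.le]
  have hc1φ : c ^ (-φ + 1) = c * c ^ (-φ) := by
    rw [show -φ + 1 = 1 + (-φ) by ring, Real.rpow_add hc0, Real.rpow_one]
  rw [hsplit, hI1, hI2, hc1φ, hcφ]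
  have hφ0 : φ ≠ 0 := by linarith
  have hφ1 : φ - 1 ≠ 0 := by intro hh; linarith
  have hexp : b * (1 + 1 / (φ - 1) * υ ^ φ * (ω / b) ^ φ)
      = b * (υ ^ φ * υ ^ (-φ)) + b * υ ^ φ * (ω / b) ^ φ * (1 / (φ - 1)) := by
    rw [hυφ]; ring
  have hφ2 : -φ + 1 ≠ 0 := by intro hh; linarith
  rw [hexp, hc]
  field_simp [hφ0, hφ1, hφ2]
  ring
end

section
/- Let φ > 0, let n ≥ 1, let a_1, …, a_n be strictly positive reals, and let U_1, …, U_n : Ω → ℝ be mutually independent random variables such that for every j and every real u > 0, μ{ω : U_j(ω) ≤ u} = exp(−u^{−φ}) (each U_j has the standard Fréchet distribution with shape φ). Then for every index i, μ{ω : a_j · U_j(ω) ≤ a_i · U_i(ω) for all j = 1, …, n} = a_i^φ / ∑_{j=1}^n a_j^φ. (Choice-probability formula underlying the regional population shares M_i = v_i ω_i^{φ_m}/∑_j v_j ω_j^{φ_m} in the migration extension of the stylized model, Online Appendix C.3.) -/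
open MeasureTheory ProbabilityTheory
open Set Filter Topology Real

lemma aux_integral_exp {b : ℝ} (hb : 0 < b) :
    ∫ x in Ioi (0:ℝ), Real.exp (-(b * x)) = 1 / b := by
  have hInt : IntegrableOn (fun x : ℝ => Real.exp (-(b * x))) (Ioi 0) := by
    simpa [neg_mul] using exp_neg_integrableOn_Ioi 0 hb
  have hderiv : ∀ x ∈ Ici (0:ℝ),
      HasDerivAt (fun x => -Real.exp (-(b * x)) / b) (Real.exp (-(b * x))) x := by
    intro x _
    have h1 : HasDerivAt (fun x : ℝ => -(b*x)) (-b) x := by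
      simpa using ((hasDerivAt_id x).const_mul b).fun_neg
    have h2 := ((Real.hasDerivAt_exp (-(b*x))).comp x h1).neg.div_const b
    refine h2.congr_deriv ?_
    rw [div_eq_iff hb.ne']; ring
  have htend : Tendsto (fun x : ℝ => -Real.exp (-(b * x)) / b) atTop (𝓝 0) := by
    have h0 : Tendsto (fun x : ℝ => -(b*x)) atTop atBot :=
      tendsto_neg_atBot_iff.mpr (Tendsto.const_mul_atTop hb tendsto_id)
    have := (Real.tendsto_exp_atBot.comp h0).neg.div_const b
    simpa using this
  have := integral_Ioi_of_hasDerivAt_of_tendsto' hderiv hInt htend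
  rw [this]
  field_simp
  simp

lemma measurable_rpc (c : ℝ) : Measurable (fun x : ℝ => x ^ c) := by measurability

noncomputable def eMeas : Measure ℝ :=
  (volume.restrict (Ioi 0)).withDensity (fun x => ENNReal.ofReal (Real.exp (-x)))

noncomputable def frechet (φ : ℝ) : Measure ℝ := eMeas.map (fun x : ℝ => x ^ (-φ⁻¹))

lemma setLIntegral_exp_Ici (t : ℝ) :
    ∫⁻ x in Ici t, ENNReal.ofReal (Real.exp (-x)) = ENNReal.ofReal (Real.exp (-t)) := by
  rw [← restrict_Ioi_eq_restrict_Ici]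
  rw [← ofReal_integral_eq_lintegral_ofReal]
  · rw [integral_exp_neg_Ioi]
  · simpa [neg_mul, IntegrableOn] using (exp_neg_integrableOn_Ioi t one_pos)
  · filter_upwards with x using (Real.exp_pos _).le

variable {φ : ℝ} (hφ : 0 < φ)

lemma rpow_inv_eq {x : ℝ} (hx : 0 < x) (hφ : 0 < φ) : (x ^ (-φ⁻¹)) ^ (-φ) = x := by
  rw [← Real.rpow_mul hx.le]
  rw [neg_mul_neg, inv_mul_cancel₀ hφ.ne', Real.rpow_one]

lemma frechet_Iic_pos {u : ℝ} (hu : 0 < u) (hφ : 0 < φ) :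
    frechet φ (Iic u) = ENNReal.ofReal (Real.exp (-(u ^ (-φ)))) := by
  rw [frechet, Measure.map_apply (measurable_rpc _) measurableSet_Iic]
  rw [eMeas, withDensity_apply _ ((measurable_rpc _) measurableSet_Iic),
    Measure.restrict_restrict ((measurable_rpc _) measurableSet_Iic)]
  have hset : (fun x : ℝ => x ^ (-φ⁻¹)) ⁻¹' Iic u ∩ Ioi 0 = Ici (u ^ (-φ)) := by
    ext x
    simp only [mem_inter_iff, mem_preimage, mem_Iic, mem_Ioi, mem_Ici]
    constructor
    · rintro ⟨h1, h2⟩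
      have hA : 0 < x ^ (-φ⁻¹) := Real.rpow_pos_of_pos h2 _
      have := (Real.rpow_le_rpow_iff_of_neg hu hA (neg_neg_iff_pos.mpr hφ)).mpr h1
      rwa [rpow_inv_eq h2 hφ] at this
    · intro h
      have hx : 0 < x := lt_of_lt_of_le (Real.rpow_pos_of_pos hu _) h
      refine ⟨?_, hx⟩
      have hA : 0 < x ^ (-φ⁻¹) := Real.rpow_pos_of_pos hx _
      rw [← rpow_inv_eq hx hφ] at h
      exact (Real.rpow_le_rpow_iff_of_neg hu hA (neg_neg_iff_pos.mpr hφ)).mp h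
  rw [hset, setLIntegral_exp_Ici]

lemma frechet_Iic_nonpos {u : ℝ} (hu : u ≤ 0) : frechet φ (Iic u) = 0 := by
  rw [frechet, Measure.map_apply (measurable_rpc _) measurableSet_Iic]
  rw [eMeas, withDensity_apply _ ((measurable_rpc _) measurableSet_Iic),
    Measure.restrict_restrict ((measurable_rpc _) measurableSet_Iic)]
  have hset : (fun x : ℝ => x ^ (-φ⁻¹)) ⁻¹' Iic u ∩ Ioi 0 = ∅ := by
    ext x
    simp only [mem_inter_iff, mem_preimage, mem_Iic, mem_Ioi, mem_empty_iff_false, iff_false]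
    rintro ⟨h1, h2⟩
    exact absurd (h1.trans hu) (not_le.mpr (Real.rpow_pos_of_pos h2 _))
  rw [hset]
  simp

lemma frechet_lintegral {r : ℝ} (hr : 0 ≤ r) (hφ : 0 < φ) :
    ∫⁻ u, ENNReal.ofReal (Real.exp (-(r * u ^ (-φ)))) ∂(frechet φ)
      = ENNReal.ofReal (1 / (1 + r)) := by
  have hg : Measurable (fun u : ℝ => ENNReal.ofReal (Real.exp (-(r * u ^ (-φ))))) := by
    measurability
  rw [frechet, lintegral_map hg (measurable_rpc _)]
  have hd : Measurable fun x : ℝ => ENNReal.ofReal (Real.exp (-x)) := by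
    exact (Real.measurable_exp.comp measurable_neg).ennreal_ofReal
  rw [eMeas, lintegral_withDensity_eq_lintegral_mul _ hd (by measurability)]
  simp only [Pi.mul_apply]
  have hcongr : ∫⁻ x in Ioi (0:ℝ),
      ENNReal.ofReal (Real.exp (-x)) * ENNReal.ofReal (Real.exp (-(r * (x ^ (-φ⁻¹)) ^ (-φ))))
      = ∫⁻ x in Ioi (0:ℝ), ENNReal.ofReal (Real.exp (-((1 + r) * x))) := by
    refine setLIntegral_congr_fun measurableSet_Ioi ?_
    intro x hx
    beta_reduce
    rw [rpow_inv_eq hx hφ, ← ENNReal.ofReal_mul (Real.exp_pos _).le, ← Real.exp_add]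
    ring_nf
  rw [hcongr]
  rw [← ofReal_integral_eq_lintegral_ofReal]
  · rw [aux_integral_exp (by linarith : (0:ℝ) < 1 + r)]
  · exact (exp_neg_integrableOn_Ioi 0 (by linarith : (0:ℝ) < 1 + r)).congr_fun
      (fun x _ => by beta_reduce; rw [neg_mul]) measurableSet_Ioi
  · filter_upwards with x using (Real.exp_pos _).le

lemma map_eq_frechet {Ω : Type*} [MeasurableSpace Ω] (μ : Measure Ω) [IsProbabilityMeasure μ]
    {φ : ℝ} (hφ : 0 < φ) {V : Ω → ℝ} (hVm : Measurable V)
    (hcdf : ∀ u : ℝ, 0 < u → μ {ω | V ω ≤ u} = ENNReal.ofReal (Real.exp (-(u ^ (-φ))))) :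
    μ.map V = frechet φ := by
  haveI : IsProbabilityMeasure (μ.map V) := Measure.isProbabilityMeasure_map hVm.aemeasurable
  refine Measure.ext_of_Iic (μ.map V) (frechet φ) (fun u => ?_)
  rw [Measure.map_apply hVm measurableSet_Iic]
  rcases lt_or_ge 0 u with hu | hu
  · rw [frechet_Iic_pos hu hφ]; exact hcdf u hu
  · rw [frechet_Iic_nonpos hu]
    have key : ∀ k : ℕ, μ (V ⁻¹' Iic u)
        ≤ ENNReal.ofReal (Real.exp (-((((k:ℝ)+1)⁻¹) ^ (-φ)))) := by
      intro k
      have hk : (0:ℝ) < ((k:ℝ)+1)⁻¹ := by positivity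
      calc μ (V ⁻¹' Iic u) ≤ μ (V ⁻¹' Iic (((k:ℝ)+1)⁻¹)) :=
            measure_mono (preimage_mono (Iic_subset_Iic.mpr (hu.trans hk.le)))
        _ = _ := hcdf _ hk
    have heq : ∀ k : ℕ, (((k:ℝ)+1)⁻¹) ^ (-φ) = ((k:ℝ)+1) ^ φ := by
      intro k
      rw [Real.inv_rpow (by positivity), Real.rpow_neg (by positivity), inv_inv]
    have h1 : Tendsto (fun k : ℕ => (((k:ℝ)+1)⁻¹) ^ (-φ)) atTop atTop := by
      simp only [heq]
      exact (tendsto_rpow_atTop hφ).comp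
        (tendsto_atTop_add_const_right atTop 1 tendsto_natCast_atTop_atTop)
    have htend : Tendsto (fun k : ℕ =>
        ENNReal.ofReal (Real.exp (-((((k:ℝ)+1)⁻¹) ^ (-φ))))) atTop (𝓝 0) := by
      have h2 : Tendsto (fun k : ℕ => Real.exp (-((((k:ℝ)+1)⁻¹) ^ (-φ)))) atTop (𝓝 0) :=
        Real.tendsto_exp_atBot.comp (tendsto_neg_atBot_iff.mpr h1)
      have := ENNReal.tendsto_ofReal h2
      simpa using this
    exact le_antisymm (ge_of_tendsto' htend key) zero_le

/-- Fréchet choice-probability formula underlying the regional population shares in the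
migration extension (Online Appendix C.3): if `U 1, …, U n` are independent standard
Fréchet random variables with shape `φ` and `a j > 0`, then for every `i`,
`μ {ω | ∀ j, a j * U j ω ≤ a i * U i ω} = (a i)^φ / ∑ j, (a j)^φ`. -/
theorem stmt_16 {Ω : Type*} [MeasurableSpace Ω] (μ : Measure Ω) [IsProbabilityMeasure μ]
    (φ : ℝ) (hφ : 0 < φ) (n : ℕ) (hn : 1 ≤ n)
    (a : Fin n → ℝ) (ha : ∀ j, 0 < a j)
    (U : Fin n → Ω → ℝ) (hUm : ∀ j, Measurable (U j))
    (hindep : iIndepFun U μ)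
    (hcdf : ∀ j, ∀ u : ℝ, 0 < u →
      μ {ω | U j ω ≤ u} = ENNReal.ofReal (Real.exp (-(u ^ (-φ))))) :
    ∀ i, μ {ω | ∀ j, a j * U j ω ≤ a i * U i ω}
      = ENNReal.ofReal (a i ^ φ / ∑ j, a j ^ φ) := by
  intro i
  classical
  set T : Finset (Fin n) := {i}ᶜ with hT
  set c : ℝ := ∑ j, a j ^ φ with hc
  set r : ℝ := ∑ j ∈ T, (a j / a i) ^ φ with hr
  have hrnn : 0 ≤ r :=
    Finset.sum_nonneg fun j _ => (Real.rpow_pos_of_pos (div_pos (ha j) (ha i)) φ).le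
  set Y : Ω → ({x // x ∈ T} → ℝ) := fun ω j => U j ω with hYdef
  have hYm : Measurable Y := measurable_pi_lambda _ fun j => hUm j
  have hindepXY : IndepFun (U i) Y μ := by
    have h := hindep.indepFun_finset {i} T (by simp [hT]) hUm
    exact h.comp (measurable_pi_apply
      (⟨i, Finset.mem_singleton_self i⟩ : {x // x ∈ ({i} : Finset (Fin n))})) measurable_id
  set B : Set (ℝ × ({x // x ∈ T} → ℝ)) :=
    {p | ∀ j : {x // x ∈ T}, a j * p.2 j ≤ a i * p.1} with hBdef
  have hB : MeasurableSet B := by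
    have : B = ⋂ j : {x // x ∈ T}, {p : ℝ × ({x // x ∈ T} → ℝ) | a j * p.2 j ≤ a i * p.1} := by
      ext p; simp [hBdef]
    rw [this]
    exact MeasurableSet.iInter fun j => measurableSet_le
      (((measurable_pi_apply j).comp measurable_snd).const_mul _)
      (measurable_fst.const_mul _)
  have hAB : {ω | ∀ j, a j * U j ω ≤ a i * U i ω} = (fun ω => (U i ω, Y ω)) ⁻¹' B := by
    ext ω
    simp only [mem_setOf_eq, mem_preimage, hBdef]
    constructor
    · exact fun h j => h j
    · intro h j
      by_cases hj : j = i
      · subst hj; exact le_rfl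
      · exact h ⟨j, by simp [hT, hj]⟩
  haveI : IsProbabilityMeasure (μ.map Y) := Measure.isProbabilityMeasure_map hYm.aemeasurable
  rw [hAB, ← Measure.map_apply ((hUm i).prodMk hYm) hB,
    (indepFun_iff_map_prod_eq_prod_map_map (hUm i).aemeasurable hYm.aemeasurable).mp hindepXY,
    map_eq_frechet μ hφ (hUm i) (hcdf i), Measure.prod_apply hB]
  have hslice : ∀ u : ℝ, 0 < u → (μ.map Y) (Prod.mk u ⁻¹' B)
      = ENNReal.ofReal (Real.exp (-(r * u ^ (-φ)))) := by
    intro u hu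
    have hsm : MeasurableSet {v : {x // x ∈ T} → ℝ | ∀ j : {x // x ∈ T}, a j * v j ≤ a i * u} := by
      have : {v : {x // x ∈ T} → ℝ | ∀ j : {x // x ∈ T}, a j * v j ≤ a i * u}
          = ⋂ j : {x // x ∈ T}, {v : {x // x ∈ T} → ℝ | a j * v j ≤ a i * u} := by
        ext v; simp
      rw [this]
      exact MeasurableSet.iInter fun j => measurableSet_le
        ((measurable_pi_apply j).const_mul _) measurable_const
    have hpre1 : Prod.mk u ⁻¹' B
        = {v : {x // x ∈ T} → ℝ | ∀ j : {x // x ∈ T}, a j * v j ≤ a i * u} := rfl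
    rw [hpre1, Measure.map_apply hYm hsm]
    have hpre : Y ⁻¹' {v : {x // x ∈ T} → ℝ | ∀ j : {x // x ∈ T}, a j * v j ≤ a i * u}
        = ⋂ j ∈ T, U j ⁻¹' Iic (a i * u / a j) := by
      ext ω
      simp only [mem_preimage, mem_setOf_eq, mem_iInter, mem_Iic, hYdef]
      constructor
      · intro h j hj
        exact (le_div_iff₀' (ha j)).mpr (h ⟨j, hj⟩)
      · intro h j
        exact (le_div_iff₀' (ha j)).mp (h j j.2)
    rw [hpre, hindep.meas_biInter (fun j hj => ⟨Iic (a i * u / a j), measurableSet_Iic, rfl⟩)]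
    have heach : ∀ j ∈ T, μ (U j ⁻¹' Iic (a i * u / a j))
        = ENNReal.ofReal (Real.exp (-((a j / a i) ^ φ * u ^ (-φ)))) := by
      intro j hj
      have hpos : 0 < a i * u / a j := div_pos (mul_pos (ha i) hu) (ha j)
      have hval := hcdf j _ hpos
      have harg : (a i * u / a j) ^ (-φ) = (a j / a i) ^ φ * u ^ (-φ) := by
        rw [show a i * u / a j = u * (a i / a j) by ring,
          Real.mul_rpow hu.le (div_pos (ha i) (ha j)).le,
          Real.rpow_neg (div_pos (ha i) (ha j)).le,
          ← Real.inv_rpow (div_pos (ha i) (ha j)).le, inv_div]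
        ring
      rw [show U j ⁻¹' Iic (a i * u / a j) = {ω | U j ω ≤ a i * u / a j} from rfl, hval, harg]
    rw [Finset.prod_congr rfl heach,
      ← ENNReal.ofReal_prod_of_nonneg (fun j _ => (Real.exp_pos _).le)]
    congr 1
    rw [← Real.exp_sum]
    congr 1
    rw [Finset.sum_neg_distrib, ← Finset.sum_mul, ← hr]
  have hnull : (frechet φ) {u : ℝ | ¬ 0 < u} = 0 := by
    have : {u : ℝ | ¬ 0 < u} = Iic 0 := by ext x; simp [not_lt]
    rw [this]; exact frechet_Iic_nonpos le_rfl
  have hae : (fun u => (μ.map Y) (Prod.mk u ⁻¹' B))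
      =ᵐ[frechet φ] (fun u => ENNReal.ofReal (Real.exp (-(r * u ^ (-φ))))) := by
    filter_upwards [(ae_iff).mpr hnull] with u hu
    exact hslice u hu
  rw [lintegral_congr_ae hae, frechet_lintegral hrnn hφ]
  congr 1
  have hipos : (0:ℝ) < a i ^ φ := Real.rpow_pos_of_pos (ha i) φ
  have hsum : ∑ j ∈ T, a j ^ φ = c - a i ^ φ := by
    have h0 := Finset.sum_compl_add_sum ({i} : Finset (Fin n)) (fun j => a j ^ φ)
    rw [Finset.sum_singleton] at h0
    rw [hT, hc]
    linarith [h0]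
  have h1r : 1 + r = c / a i ^ φ := by
    have hreq : r = (∑ j ∈ T, a j ^ φ) / a i ^ φ := by
      rw [hr, Finset.sum_div]
      exact Finset.sum_congr rfl fun j _ => Real.div_rpow (ha j).le (ha i).le φ
    rw [hreq, hsum]
    field_simp
    ring
  rw [h1r, one_div_div]
end
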